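/- Let ψ : U → ℝⁿ be a C^∞ map on an open set U ⊆ ℝᵐ with Dψ(u) injective for every u ∈ U, and define G : ℝⁿ × U → ℝᵐ by G(a, u) := Dψ(u)ᵀ(a − ψ(u)). Then G is C^∞, and for every (a, u) ∈ ℝⁿ × U the derivative DG(a,u) : ℝⁿ × ℝᵐ → ℝᵐ is surjective and its kernel is an n-dimensional linear subspace of ℝⁿ × ℝᵐ. -/

import Mathlib

noncomputable section

/-- The adjoint of an injective continuous linear map between finite-dimensional real inner
product spaces is surjective. -/
lemma adjoint_surjective_of_injective
    {E F : Type*} [NormedAddCommGroup E] [InnerProductSpace ℝ E]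
    [NormedAddCommGroup F] [InnerProductSpace ℝ F]
    [FiniteDimensional ℝ E] [FiniteDimensional ℝ F]
    (T : E →L[ℝ] F) (hT : Function.Injective T) :
    Function.Surjective (ContinuousLinearMap.adjoint T) := by
  rw [← ContinuousLinearMap.coe_coe, ← LinearMap.range_eq_top]
  have horth : (LinearMap.range (ContinuousLinearMap.adjoint T).toLinearMap)ᗮ = ⊥ := by
    rw [Submodule.eq_bot_iff]
    intro y hy
    have h1 : inner ℝ (ContinuousLinearMap.adjoint T (T y)) y = (0 : ℝ) :=
      hy _ ⟨T y, rfl⟩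
    have h2 : inner ℝ (T y) (T y) = (0 : ℝ) := by
      rwa [ContinuousLinearMap.adjoint_inner_left] at h1
    have h3 : T y = 0 := by
      simpa [real_inner_self_eq_norm_sq] using h2
    have : T y = T 0 := by simpa using h3
    simpa using hT this
  have := congrArg (Submodule.orthogonal) horth
  rwa [Submodule.orthogonal_orthogonal, Submodule.bot_orthogonal_eq_top] at this

/-- The map `T ↦ adjoint T` is a bounded linear map over `ℝ`. -/
lemma isBoundedLinearMap_adjoint
    {E F : Type*} [NormedAddCommGroup E] [InnerProductSpace ℝ E]
    [NormedAddCommGroup F] [InnerProductSpace ℝ F]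
    [FiniteDimensional ℝ E] [FiniteDimensional ℝ F] :
    IsBoundedLinearMap ℝ (fun T : E →L[ℝ] F => ContinuousLinearMap.adjoint T) := by
  refine ⟨⟨fun A B => ?_, fun c A => ?_⟩, 1, one_pos, fun A => ?_⟩
  · exact map_add (ContinuousLinearMap.adjoint (𝕜 := ℝ) (E := E) (F := F)) A B
  · simpa using map_smulₛₗ (ContinuousLinearMap.adjoint (𝕜 := ℝ) (E := E) (F := F)) c A
  · rw [one_mul]
    exact le_of_eq ((ContinuousLinearMap.adjoint (𝕜 := ℝ) (E := E) (F := F)).norm_map A)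

/-- Chart formulation of Lemma 4.1: the defining map `G(a,u) = Dψ(u)ᵀ(a − ψ(u))` of the
critical point locus is smooth, a submersion, and its derivative has `n`-dimensional kernel. -/
theorem stmt_8 {m n : ℕ}
    (U : Set (EuclideanSpace ℝ (Fin m))) (hU : IsOpen U)
    (ψ : EuclideanSpace ℝ (Fin m) → EuclideanSpace ℝ (Fin n))
    (hψ : ContDiffOn ℝ (⊤ : ℕ∞) ψ U)
    (hinj : ∀ u ∈ U, Function.Injective (fderiv ℝ ψ u))
    (G : EuclideanSpace ℝ (Fin n) × EuclideanSpace ℝ (Fin m) → EuclideanSpace ℝ (Fin m))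
    (hG : ∀ a u, G (a, u) = ContinuousLinearMap.adjoint (fderiv ℝ ψ u) (a - ψ u)) :
    ContDiffOn ℝ (⊤ : ℕ∞) G (Set.univ ×ˢ U) ∧
    ∀ (a : EuclideanSpace ℝ (Fin n)), ∀ u ∈ U,
      Function.Surjective (fderiv ℝ G (a, u)) ∧
      Module.finrank ℝ (LinearMap.ker ((fderiv ℝ G (a, u)).toLinearMap)) = n := by
  set A : EuclideanSpace ℝ (Fin m) →
      (EuclideanSpace ℝ (Fin n) →L[ℝ] EuclideanSpace ℝ (Fin m)) :=
    fun u => ContinuousLinearMap.adjoint (fderiv ℝ ψ u) with hAdef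
  -- smoothness of `u ↦ Dψ(u)ᵀ` on `U`
  have hfd : ContDiffOn ℝ (⊤ : ℕ∞) (fderiv ℝ ψ) U :=
    hψ.fderiv_of_isOpen hU (le_of_eq (by norm_cast))
  have hA : ContDiffOn ℝ (⊤ : ℕ∞) A U :=
    (isBoundedLinearMap_adjoint.contDiff).comp_contDiffOn hfd
  have hmaps : (Set.univ ×ˢ U : Set (EuclideanSpace ℝ (Fin n) × EuclideanSpace ℝ (Fin m)))
      ⊆ Prod.snd ⁻¹' U := fun p hp => hp.2
  have hGsmooth : ContDiffOn ℝ (⊤ : ℕ∞) G (Set.univ ×ˢ U) := by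
    have hfun : ContDiffOn ℝ (⊤ : ℕ∞)
        (fun p : EuclideanSpace ℝ (Fin n) × EuclideanSpace ℝ (Fin m) =>
          A p.2 (p.1 - ψ p.2)) (Set.univ ×ˢ U) := by
      refine ContDiffOn.clm_apply ?_ ?_
      · exact hA.comp contDiffOn_snd hmaps
      · exact contDiffOn_fst.sub (hψ.comp contDiffOn_snd hmaps)
    have : G = fun p : EuclideanSpace ℝ (Fin n) × EuclideanSpace ℝ (Fin m) =>
        A p.2 (p.1 - ψ p.2) := by
      funext p
      rw [← Prod.mk.eta (p := p), hG p.1 p.2]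
    rw [this]
    exact hfun
  refine ⟨hGsmooth, fun a u hu => ?_⟩
  have hmem : (a, u) ∈ Set.univ ×ˢ U := ⟨Set.mem_univ a, hu⟩
  have hopen : IsOpen ((Set.univ : Set (EuclideanSpace ℝ (Fin n))) ×ˢ U) :=
    isOpen_univ.prod hU
  have hdiff : DifferentiableAt ℝ G (a, u) :=
    ((hGsmooth.contDiffAt (hopen.mem_nhds hmem)).differentiableAt (by simp))
  -- the partial derivative in the `a` direction is `A u`
  have hpart : (fderiv ℝ G (a, u)).comp
      (ContinuousLinearMap.inl ℝ (EuclideanSpace ℝ (Fin n)) (EuclideanSpace ℝ (Fin m)))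
      = A u := by
    have h1 : HasFDerivAt (fun a' => G (a', u))
        ((fderiv ℝ G (a, u)).comp
          (ContinuousLinearMap.inl ℝ (EuclideanSpace ℝ (Fin n)) (EuclideanSpace ℝ (Fin m)))) a :=
      (hdiff.hasFDerivAt).comp a (hasFDerivAt_prodMk_left a u)
    have h2 : HasFDerivAt (fun a' => G (a', u)) (A u) a := by
      have hsub : HasFDerivAt (fun a' : EuclideanSpace ℝ (Fin n) => a' - ψ u)
          (ContinuousLinearMap.id ℝ (EuclideanSpace ℝ (Fin n))) a :=
        (hasFDerivAt_id a).sub_const (ψ u)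
      have h3 := ((A u).hasFDerivAt (x := a - ψ u)).comp a hsub
      simp only [ContinuousLinearMap.comp_id] at h3
      exact h3.congr_of_eventuallyEq (Filter.Eventually.of_forall fun a' => hG a' u)
    exact h1.unique h2
  have hAsurj : Function.Surjective (A u) :=
    adjoint_surjective_of_injective _ (hinj u hu)
  have hsurj : Function.Surjective (fderiv ℝ G (a, u)) := by
    intro y
    obtain ⟨b, hb⟩ := hAsurj y
    refine ⟨(b, 0), ?_⟩
    have := congrFun (congrArg DFunLike.coe hpart) b
    simpa using this.trans hb
  refine ⟨hsurj, ?_⟩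
  have hrk := LinearMap.finrank_range_add_finrank_ker
    ((fderiv ℝ G (a, u)) : (EuclideanSpace ℝ (Fin n) × EuclideanSpace ℝ (Fin m))
      →ₗ[ℝ] EuclideanSpace ℝ (Fin m))
  have hrange : LinearMap.range ((fderiv ℝ G (a, u)) :
      (EuclideanSpace ℝ (Fin n) × EuclideanSpace ℝ (Fin m))
      →ₗ[ℝ] EuclideanSpace ℝ (Fin m)) = ⊤ := by
    rw [LinearMap.range_eq_top]
    exact hsurj
  rw [hrange, finrank_top, Module.finrank_prod, finrank_euclideanSpace_fin,
    finrank_euclideanSpace_fin] at hrk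
  have hker : LinearMap.ker ((fderiv ℝ G (a, u)) :
      (EuclideanSpace ℝ (Fin n) × EuclideanSpace ℝ (Fin m))
      →ₗ[ℝ] EuclideanSpace ℝ (Fin m)) = LinearMap.ker (fderiv ℝ G (a, u)).toLinearMap := rfl
  rw [hker] at hrk
  omega
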